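/- Let (H, μ, Δ, α, β, 1, ε, S) be a monoidal BiHom-Hopf algebra. Then: (i) S(1) = 1 and ε∘S = ε; (ii) S(β(a)α(b)) = S(β(b))S(α(a)) for all a, b ∈ H; (iii) α(S(h)₁)⊗β(S(h)₂) = β(S(h₂))⊗α(S(h₁)) for all h ∈ H. -/

import Mathlib

open scoped TensorProduct
open TensorProduct LinearMap

private lemma biHom_conv_assoc {k A X : Type*} [Field k] [AddCommGroup A] [Module k A]
    [AddCommGroup X] [Module k X]
    (mA : A ⊗[k] A →ₗ[k] A) (dX : X →ₗ[k] X ⊗[k] X)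
    (αA βA : A →ₗ[k] A) (αX ωX ψX : X →ₗ[k] X)
    (f f' g h : X →ₗ[k] A)
    (hassocA : ∀ p q r : A, mA (αA p ⊗ₜ[k] mA (q ⊗ₜ[k] r)) = mA (mA (p ⊗ₜ[k] q) ⊗ₜ[k] βA r))
    (hcoX : (TensorProduct.assoc k X X X).toLinearMap ∘ₗ
      TensorProduct.map dX ψX ∘ₗ dX = TensorProduct.map ωX dX ∘ₗ dX)
    (hαω : ∀ x, αX (ωX x) = x)
    (hf : ∀ x, f (αX x) = αA (f' x)) :
    mA ∘ₗ TensorProduct.map f (mA ∘ₗ TensorProduct.map g h ∘ₗ dX) ∘ₗ dX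
      = mA ∘ₗ TensorProduct.map (mA ∘ₗ TensorProduct.map f' g ∘ₗ dX)
          (βA ∘ₗ h ∘ₗ ψX) ∘ₗ dX := by
  have s1 : mA ∘ₗ TensorProduct.map f (mA ∘ₗ TensorProduct.map g h ∘ₗ dX)
      = (mA ∘ₗ TensorProduct.map (LinearMap.id : A →ₗ[k] A) mA
          ∘ₗ TensorProduct.map f (TensorProduct.map g h))
        ∘ₗ TensorProduct.map (LinearMap.id : X →ₗ[k] X) dX :=
    TensorProduct.ext' fun a b => by simp
  have s2 : (mA ∘ₗ TensorProduct.map (LinearMap.id : A →ₗ[k] A) mA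
        ∘ₗ TensorProduct.map f (TensorProduct.map g h))
      ∘ₗ TensorProduct.map αX (LinearMap.id : X ⊗[k] X →ₗ[k] X ⊗[k] X)
      = mA ∘ₗ TensorProduct.map αA mA
        ∘ₗ TensorProduct.map f' (TensorProduct.map g h) :=
    TensorProduct.ext' fun a u => by simp [hf]
  have s3 : (mA ∘ₗ TensorProduct.map αA mA
        ∘ₗ TensorProduct.map f' (TensorProduct.map g h))
      ∘ₗ (TensorProduct.assoc k X X X).toLinearMap
      = mA ∘ₗ TensorProduct.map mA βA
        ∘ₗ TensorProduct.map (TensorProduct.map f' g) h :=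
    TensorProduct.ext_threefold fun a b c => by simp [hassocA]
  have s4 : (mA ∘ₗ TensorProduct.map mA βA
        ∘ₗ TensorProduct.map (TensorProduct.map f' g) h)
      ∘ₗ TensorProduct.map dX ψX
      = mA ∘ₗ TensorProduct.map (mA ∘ₗ TensorProduct.map f' g ∘ₗ dX)
          (βA ∘ₗ h ∘ₗ ψX) :=
    TensorProduct.ext' fun a b => by simp
  have e1 : TensorProduct.map (LinearMap.id : X →ₗ[k] X) dX ∘ₗ dX
      = TensorProduct.map αX (LinearMap.id : X ⊗[k] X →ₗ[k] X ⊗[k] X)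
        ∘ₗ (TensorProduct.assoc k X X X).toLinearMap
        ∘ₗ TensorProduct.map dX ψX ∘ₗ dX := by
    rw [hcoX, ← LinearMap.comp_assoc,
      show TensorProduct.map αX (LinearMap.id : X ⊗[k] X →ₗ[k] X ⊗[k] X)
          ∘ₗ TensorProduct.map ωX dX
        = TensorProduct.map (LinearMap.id : X →ₗ[k] X) dX from
        TensorProduct.ext' fun a b => by simp [hαω]]
  ext x
  have E0 := LinearMap.congr_fun s1 (dX x)
  have E1 := LinearMap.congr_fun e1 x
  have E2 := LinearMap.congr_fun s2
    ((TensorProduct.assoc k X X X) ((TensorProduct.map dX ψX) (dX x)))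
  have E3 := LinearMap.congr_fun s3 ((TensorProduct.map dX ψX) (dX x))
  have E4 := LinearMap.congr_fun s4 (dX x)
  simp only [LinearMap.coe_comp, Function.comp_apply, LinearEquiv.coe_coe] at E0 E1 E2 E3 E4 ⊢
  rw [E0, E1, E2, E3, E4]

private lemma biHom_conv_unit_left {k A X : Type*} [Field k] [AddCommGroup A] [Module k A]
    [AddCommGroup X] [Module k X]
    (mA : A ⊗[k] A →ₗ[k] A) (dX : X →ₗ[k] X ⊗[k] X)
    (βA : A →ₗ[k] A) (ψX : X →ₗ[k] X) (oneA : A) (εX : X →ₗ[k] k) (f : X →ₗ[k] A)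
    (hl : ∀ a : A, mA (oneA ⊗ₜ[k] a) = βA a)
    (hcounitX : (TensorProduct.lid k X).toLinearMap ∘ₗ
      TensorProduct.map εX (LinearMap.id : X →ₗ[k] X) ∘ₗ dX = ψX) :
    mA ∘ₗ TensorProduct.map (LinearMap.toSpanSingleton k A oneA ∘ₗ εX) f ∘ₗ dX
      = βA ∘ₗ f ∘ₗ ψX := by
  have s1 : mA ∘ₗ TensorProduct.map (LinearMap.toSpanSingleton k A oneA ∘ₗ εX) f
      = (βA ∘ₗ f) ∘ₗ (TensorProduct.lid k X).toLinearMap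
        ∘ₗ TensorProduct.map εX (LinearMap.id : X →ₗ[k] X) :=
    TensorProduct.ext' fun a b => by
      simp only [LinearMap.coe_comp, Function.comp_apply, LinearMap.toSpanSingleton_apply,
        TensorProduct.map_tmul, LinearMap.id_coe, id_eq, LinearEquiv.coe_coe,
        TensorProduct.lid_tmul, ← TensorProduct.smul_tmul', map_smul, hl]
  ext x
  have E1 := LinearMap.congr_fun s1 (dX x)
  have E2 := LinearMap.congr_fun hcounitX x
  simp only [LinearMap.coe_comp, Function.comp_apply, LinearEquiv.coe_coe] at E1 E2 ⊢
  rw [E1, E2]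

private lemma biHom_conv_unit_right {k A X : Type*} [Field k] [AddCommGroup A] [Module k A]
    [AddCommGroup X] [Module k X]
    (mA : A ⊗[k] A →ₗ[k] A) (dX : X →ₗ[k] X ⊗[k] X)
    (αA : A →ₗ[k] A) (ωX : X →ₗ[k] X) (oneA : A) (εX : X →ₗ[k] k) (f : X →ₗ[k] A)
    (hr : ∀ a : A, mA (a ⊗ₜ[k] oneA) = αA a)
    (hcounitX : (TensorProduct.rid k X).toLinearMap ∘ₗ
      TensorProduct.map (LinearMap.id : X →ₗ[k] X) εX ∘ₗ dX = ωX) :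
    mA ∘ₗ TensorProduct.map f (LinearMap.toSpanSingleton k A oneA ∘ₗ εX) ∘ₗ dX
      = αA ∘ₗ f ∘ₗ ωX := by
  have s1 : mA ∘ₗ TensorProduct.map f (LinearMap.toSpanSingleton k A oneA ∘ₗ εX)
      = (αA ∘ₗ f) ∘ₗ (TensorProduct.rid k X).toLinearMap
        ∘ₗ TensorProduct.map (LinearMap.id : X →ₗ[k] X) εX :=
    TensorProduct.ext' fun a b => by
      simp only [LinearMap.coe_comp, Function.comp_apply, LinearMap.toSpanSingleton_apply,
        TensorProduct.map_tmul, LinearMap.id_coe, id_eq, LinearEquiv.coe_coe,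
        TensorProduct.rid_tmul, TensorProduct.tmul_smul, map_smul, hr]
  ext x
  have E1 := LinearMap.congr_fun s1 (dX x)
  have E2 := LinearMap.congr_fun hcounitX x
  simp only [LinearMap.coe_comp, Function.comp_apply, LinearEquiv.coe_coe] at E1 E2 ⊢
  rw [E1, E2]

private lemma map_map_apply {k M N P Q M' N' : Type*} [Field k]
    [AddCommGroup M] [Module k M] [AddCommGroup N] [Module k N]
    [AddCommGroup P] [Module k P] [AddCommGroup Q] [Module k Q]
    [AddCommGroup M'] [Module k M'] [AddCommGroup N'] [Module k N']
    (f : M →ₗ[k] P) (g : N →ₗ[k] Q) (f' : M' →ₗ[k] M) (g' : N' →ₗ[k] N) (t : M' ⊗[k] N') :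
    TensorProduct.map f g (TensorProduct.map f' g' t)
      = TensorProduct.map (f ∘ₗ f') (g ∘ₗ g') t := by
  have := LinearMap.congr_fun (TensorProduct.map_comp f g f' g') t
  simpa only [LinearMap.coe_comp, Function.comp_apply] using this.symm

private lemma comm_map_apply {k M N P Q : Type*} [Field k]
    [AddCommGroup M] [Module k M] [AddCommGroup N] [Module k N]
    [AddCommGroup P] [Module k P] [AddCommGroup Q] [Module k Q]
    (f : M →ₗ[k] P) (g : N →ₗ[k] Q) (t : M ⊗[k] N) :
    (TensorProduct.comm k P Q) (TensorProduct.map f g t)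
      = TensorProduct.map g f ((TensorProduct.comm k M N) t) := by
  have h0 : (TensorProduct.comm k P Q).toLinearMap ∘ₗ TensorProduct.map f g
      = TensorProduct.map g f ∘ₗ (TensorProduct.comm k M N).toLinearMap :=
    TensorProduct.ext' fun a b => by simp
  have := LinearMap.congr_fun h0 t
  simpa only [LinearMap.coe_comp, Function.comp_apply, LinearEquiv.coe_coe] using this

set_option maxHeartbeats 2000000 in

/-- In a monoidal BiHom-Hopf algebra `(H, μ, Δ, α, β, 1, ε, S)` (a unital
counital BiHom-bialgebra with `ω = α⁻¹`, `ψ = β⁻¹` and antipode `S`):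
(i) `S(1) = 1` and `ε ∘ S = ε`; (ii) `S(β(a)α(b)) = S(β(b))S(α(a))`;
(iii) `α(S(h)₁) ⊗ β(S(h)₂) = β(S(h₂)) ⊗ α(S(h₁))`. -/
theorem monoidal_biHom_hopf_antipode_properties (k H : Type*) [Field k]
    [AddCommGroup H] [Module k H]
    (μ : H →ₗ[k] H →ₗ[k] H) (Δ : H →ₗ[k] H ⊗[k] H)
    (α β : H ≃ₗ[k] H) (one : H) (ε : H →ₗ[k] k) (S : H →ₗ[k] H)
    -- BiHom-associative algebra axioms
    (hab : ∀ a : H, α (β a) = β (α a))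
    (hαm : ∀ a b : H, α (μ a b) = μ (α a) (α b))
    (hβm : ∀ a b : H, β (μ a b) = μ (β a) (β b))
    (hassoc : ∀ a b c : H, μ (α a) (μ b c) = μ (μ a b) (β c))
    -- BiHom-coassociative coalgebra axioms, with ψ = β⁻¹ and ω = α⁻¹
    (hψΔ : (TensorProduct.map β.symm.toLinearMap β.symm.toLinearMap) ∘ₗ Δ =
      Δ ∘ₗ β.symm.toLinearMap)
    (hωΔ : (TensorProduct.map α.symm.toLinearMap α.symm.toLinearMap) ∘ₗ Δ =
      Δ ∘ₗ α.symm.toLinearMap)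
    (hcoassoc : (TensorProduct.assoc k H H H).toLinearMap ∘ₗ
      (TensorProduct.map Δ β.symm.toLinearMap) ∘ₗ Δ
      = (TensorProduct.map α.symm.toLinearMap Δ) ∘ₗ Δ)
    -- BiHom-bialgebra axioms
    (hΔmult : Δ ∘ₗ TensorProduct.lift μ =
      (TensorProduct.map (TensorProduct.lift μ) (TensorProduct.lift μ)) ∘ₗ
        (TensorProduct.tensorTensorTensorComm k H H H H).toLinearMap ∘ₗ
        (TensorProduct.map Δ Δ))
    (hαΔ : (TensorProduct.map α.toLinearMap α.toLinearMap) ∘ₗ Δ = Δ ∘ₗ α.toLinearMap)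
    (hβΔ : (TensorProduct.map β.toLinearMap β.toLinearMap) ∘ₗ Δ = Δ ∘ₗ β.toLinearMap)
    (hψm : ∀ a b : H, β.symm (μ a b) = μ (β.symm a) (β.symm b))
    (hωm : ∀ a b : H, α.symm (μ a b) = μ (α.symm a) (α.symm b))
    -- unit axioms
    (hα1 : α one = one) (hβ1 : β one = one)
    (hr1 : ∀ a : H, μ a one = α a) (hl1 : ∀ a : H, μ one a = β a)
    (hΔ1 : Δ one = one ⊗ₜ[k] one)
    -- counit axioms
    (hεα : ∀ a : H, ε (α a) = ε a) (hεβ : ∀ a : H, ε (β a) = ε a)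
    (hcounit_r : (TensorProduct.rid k H).toLinearMap ∘ₗ
      (TensorProduct.map (LinearMap.id : H →ₗ[k] H) ε) ∘ₗ Δ = α.symm.toLinearMap)
    (hcounit_l : (TensorProduct.lid k H).toLinearMap ∘ₗ
      (TensorProduct.map ε (LinearMap.id : H →ₗ[k] H)) ∘ₗ Δ = β.symm.toLinearMap)
    (hε1 : ε one = 1) (hεm : ∀ a b : H, ε (μ a b) = ε a * ε b)
    -- antipode axioms
    (hSα : ∀ a : H, S (α a) = α (S a)) (hSβ : ∀ a : H, S (β a) = β (S a))
    (hS_left : (TensorProduct.lift μ) ∘ₗ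
      (TensorProduct.map S (LinearMap.id : H →ₗ[k] H)) ∘ₗ Δ =
      (LinearMap.toSpanSingleton k H one) ∘ₗ ε)
    (hS_right : (TensorProduct.lift μ) ∘ₗ
      (TensorProduct.map (LinearMap.id : H →ₗ[k] H) S) ∘ₗ Δ =
      (LinearMap.toSpanSingleton k H one) ∘ₗ ε) :
    (S one = one) ∧ (∀ h : H, ε (S h) = ε h) ∧
    (∀ a b : H, S (μ (β a) (α b)) = μ (S (β b)) (S (α a))) ∧
    ((TensorProduct.map α.toLinearMap β.toLinearMap) ∘ₗ Δ ∘ₗ S =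
      (TensorProduct.map β.toLinearMap α.toLinearMap) ∘ₗ
        (TensorProduct.comm k H H).toLinearMap ∘ₗ (TensorProduct.map S S) ∘ₗ Δ) := by
  -- basic pointwise commutation helpers
  have hm : ∀ x y : H, TensorProduct.lift μ (x ⊗ₜ[k] y) = μ x y := fun x y =>
    TensorProduct.lift.tmul x y
  have hab' : ∀ x, α.symm (β x) = β (α.symm x) := by
    intro x
    apply α.injective
    rw [LinearEquiv.apply_symm_apply, hab, LinearEquiv.apply_symm_apply]
  have haβ' : ∀ x, α (β.symm x) = β.symm (α x) := by
    intro x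
    apply β.injective
    rw [LinearEquiv.apply_symm_apply, ← hab, LinearEquiv.apply_symm_apply]
  have hab'' : ∀ x, α.symm (β.symm x) = β.symm (α.symm x) := by
    intro x
    apply α.injective
    rw [LinearEquiv.apply_symm_apply, haβ', LinearEquiv.apply_symm_apply]
  have hSα' : ∀ x, S (α.symm x) = α.symm (S x) := by
    intro x
    apply α.injective
    rw [← hSα, LinearEquiv.apply_symm_apply, LinearEquiv.apply_symm_apply]
  have hSβ' : ∀ x, S (β.symm x) = β.symm (S x) := by
    intro x
    apply β.injective
    rw [← hSβ, LinearEquiv.apply_symm_apply, LinearEquiv.apply_symm_apply]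
  have hεα' : ∀ x, ε (α.symm x) = ε x := by
    intro x; conv_rhs => rw [← LinearEquiv.apply_symm_apply α x, hεα]
  have hεβ' : ∀ x, ε (β.symm x) = ε x := by
    intro x; conv_rhs => rw [← LinearEquiv.apply_symm_apply β x, hεβ]
  have hα'1 : α.symm one = one := by
    apply α.injective; rw [LinearEquiv.apply_symm_apply, hα1]
  have hβ'1 : β.symm one = one := by
    apply β.injective; rw [LinearEquiv.apply_symm_apply, hβ1]
  -- part (i) : S 1 = 1
  have hS1 : S one = one := by
    have h1 := LinearMap.congr_fun hS_right one
    simp only [LinearMap.coe_comp, Function.comp_apply, hΔ1, TensorProduct.map_tmul,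
      LinearMap.id_coe, id_eq, hε1, one_smul, LinearMap.toSpanSingleton_apply] at h1
    rw [hm, hl1] at h1
    apply β.injective
    rw [h1, hβ1]
  -- part (i) : ε ∘ S = ε
  have hεS : ∀ h : H, ε (S h) = ε h := by
    intro c
    have s1 : ε ∘ₗ TensorProduct.lift μ ∘ₗ TensorProduct.map S (LinearMap.id : H →ₗ[k] H)
        = (ε ∘ₗ S) ∘ₗ (TensorProduct.rid k H).toLinearMap
          ∘ₗ TensorProduct.map (LinearMap.id : H →ₗ[k] H) ε :=
      TensorProduct.ext' fun x y => by
        simp only [LinearMap.coe_comp, Function.comp_apply, TensorProduct.map_tmul,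
          LinearMap.id_coe, id_eq, LinearEquiv.coe_coe, TensorProduct.rid_tmul, map_smul]
        rw [hm, hεm]
        simp [mul_comm, smul_eq_mul]
    have h1 := LinearMap.congr_fun s1 (Δ c)
    have h2 := LinearMap.congr_fun hS_left c
    have h3 := LinearMap.congr_fun hcounit_r c
    simp only [LinearMap.coe_comp, Function.comp_apply, LinearEquiv.coe_coe] at h1 h2 h3
    rw [h2] at h1
    rw [h3] at h1
    simp only [map_smul, hε1, smul_eq_mul, mul_one, LinearMap.toSpanSingleton_apply] at h1
    rw [hSα', hεα'] at h1
    exact h1.symm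
  -- ==== part (ii) infrastructure : the coalgebra H ⊗ H ====
  -- twisted coassociativity of Δ₂
  have hco2 : (TensorProduct.assoc k (H ⊗[k] H) (H ⊗[k] H) (H ⊗[k] H)).toLinearMap ∘ₗ TensorProduct.map ((TensorProduct.tensorTensorTensorComm k H H H H).toLinearMap ∘ₗ TensorProduct.map Δ Δ) (TensorProduct.map β.symm.toLinearMap β.symm.toLinearMap) ∘ₗ ((TensorProduct.tensorTensorTensorComm k H H H H).toLinearMap ∘ₗ TensorProduct.map Δ Δ) = TensorProduct.map (TensorProduct.map α.symm.toLinearMap α.symm.toLinearMap) ((TensorProduct.tensorTensorTensorComm k H H H H).toLinearMap ∘ₗ TensorProduct.map Δ Δ) ∘ₗ ((TensorProduct.tensorTensorTensorComm k H H H H).toLinearMap ∘ₗ TensorProduct.map Δ Δ) := by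
    have st1 : TensorProduct.map ((TensorProduct.tensorTensorTensorComm k H H H H).toLinearMap ∘ₗ TensorProduct.map Δ Δ) (TensorProduct.map β.symm.toLinearMap β.symm.toLinearMap) ∘ₗ (TensorProduct.tensorTensorTensorComm k H H H H).toLinearMap
        = TensorProduct.map (TensorProduct.tensorTensorTensorComm k H H H H).toLinearMap (LinearMap.id : H ⊗[k] H →ₗ[k] H ⊗[k] H) ∘ₗ (TensorProduct.tensorTensorTensorComm k (H ⊗[k] H) H (H ⊗[k] H) H).toLinearMap ∘ₗ TensorProduct.map (TensorProduct.map Δ β.symm.toLinearMap) (TensorProduct.map Δ β.symm.toLinearMap) :=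
      TensorProduct.ext_fourfold' fun x y z w => by simp
    have st2 : TensorProduct.map (TensorProduct.map α.symm.toLinearMap α.symm.toLinearMap) ((TensorProduct.tensorTensorTensorComm k H H H H).toLinearMap ∘ₗ TensorProduct.map Δ Δ) ∘ₗ (TensorProduct.tensorTensorTensorComm k H H H H).toLinearMap
        = TensorProduct.map (LinearMap.id : H ⊗[k] H →ₗ[k] H ⊗[k] H) (TensorProduct.tensorTensorTensorComm k H H H H).toLinearMap ∘ₗ (TensorProduct.tensorTensorTensorComm k H (H ⊗[k] H) H (H ⊗[k] H)).toLinearMap ∘ₗ TensorProduct.map (TensorProduct.map α.symm.toLinearMap Δ) (TensorProduct.map α.symm.toLinearMap Δ) :=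
      TensorProduct.ext_fourfold' fun x y z w => by simp
    have st3 : (TensorProduct.assoc k (H ⊗[k] H) (H ⊗[k] H) (H ⊗[k] H)).toLinearMap ∘ₗ TensorProduct.map (TensorProduct.tensorTensorTensorComm k H H H H).toLinearMap (LinearMap.id : H ⊗[k] H →ₗ[k] H ⊗[k] H) ∘ₗ (TensorProduct.tensorTensorTensorComm k (H ⊗[k] H) H (H ⊗[k] H) H).toLinearMap
        = TensorProduct.map (LinearMap.id : H ⊗[k] H →ₗ[k] H ⊗[k] H) (TensorProduct.tensorTensorTensorComm k H H H H).toLinearMap ∘ₗ (TensorProduct.tensorTensorTensorComm k H (H ⊗[k] H) H (H ⊗[k] H)).toLinearMap ∘ₗ TensorProduct.map (TensorProduct.assoc k H H H).toLinearMap (TensorProduct.assoc k H H H).toLinearMap := by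
      refine TensorProduct.ext_fourfold' fun w x y z => ?_
      induction w using TensorProduct.induction_on with
      | zero => simp
      | tmul a b =>
        induction y using TensorProduct.induction_on with
        | zero => simp
        | tmul c d => simp
        | add u v hu hv =>
          simp only [add_tmul, tmul_add, map_add] at hu hv ⊢
          rw [hu, hv]
      | add u v hu hv =>
        simp only [add_tmul, tmul_add, map_add] at hu hv ⊢
        rw [hu, hv]
    refine TensorProduct.ext' fun a b => ?_
    have E1 := LinearMap.congr_fun st1 (Δ a ⊗ₜ[k] Δ b)
    have EE2 := LinearMap.congr_fun st2 (Δ a ⊗ₜ[k] Δ b)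
    have E3 := LinearMap.congr_fun st3 ((TensorProduct.map Δ β.symm.toLinearMap) (Δ a) ⊗ₜ[k] (TensorProduct.map Δ β.symm.toLinearMap) (Δ b))
    have hca := LinearMap.congr_fun hcoassoc a
    have hcb := LinearMap.congr_fun hcoassoc b
    simp only [LinearMap.coe_comp, LinearEquiv.coe_toLinearMap, LinearEquiv.coe_coe, Function.comp_apply, LinearEquiv.coe_coe, TensorProduct.map_tmul] at E1 EE2 E3 hca hcb ⊢
    rw [E1, E3, hca, hcb, EE2]
  -- counit laws for Δ₂
  have hcounit2r : (TensorProduct.rid k (H ⊗[k] H)).toLinearMap ∘ₗ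
      TensorProduct.map (LinearMap.id : H ⊗[k] H →ₗ[k] H ⊗[k] H) ((TensorProduct.lid k k).toLinearMap ∘ₗ TensorProduct.map ε ε) ∘ₗ ((TensorProduct.tensorTensorTensorComm k H H H H).toLinearMap ∘ₗ TensorProduct.map Δ Δ) = TensorProduct.map α.symm.toLinearMap α.symm.toLinearMap := by
    have st : (TensorProduct.rid k (H ⊗[k] H)).toLinearMap ∘ₗ TensorProduct.map (LinearMap.id : H ⊗[k] H →ₗ[k] H ⊗[k] H) ((TensorProduct.lid k k).toLinearMap ∘ₗ TensorProduct.map ε ε) ∘ₗ (TensorProduct.tensorTensorTensorComm k H H H H).toLinearMap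
        = TensorProduct.map ((TensorProduct.rid k H).toLinearMap ∘ₗ TensorProduct.map (LinearMap.id : H →ₗ[k] H) ε)
            ((TensorProduct.rid k H).toLinearMap ∘ₗ TensorProduct.map (LinearMap.id : H →ₗ[k] H) ε) :=
      TensorProduct.ext_fourfold' fun x y z w => by
        simp [TensorProduct.smul_tmul', TensorProduct.tmul_smul, smul_smul, mul_comm]
    refine TensorProduct.ext' fun a b => ?_
    have E1 := LinearMap.congr_fun st (Δ a ⊗ₜ[k] Δ b)
    have ha := LinearMap.congr_fun hcounit_r a
    have hb := LinearMap.congr_fun hcounit_r b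
    simp only [LinearMap.coe_comp, LinearEquiv.coe_toLinearMap, LinearEquiv.coe_coe, Function.comp_apply, LinearEquiv.coe_coe, TensorProduct.map_tmul] at E1 ha hb ⊢
    rw [E1, ha, hb]
  have hcounit2l : (TensorProduct.lid k (H ⊗[k] H)).toLinearMap ∘ₗ
      TensorProduct.map ((TensorProduct.lid k k).toLinearMap ∘ₗ TensorProduct.map ε ε) (LinearMap.id : H ⊗[k] H →ₗ[k] H ⊗[k] H) ∘ₗ ((TensorProduct.tensorTensorTensorComm k H H H H).toLinearMap ∘ₗ TensorProduct.map Δ Δ) = TensorProduct.map β.symm.toLinearMap β.symm.toLinearMap := by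
    have st : (TensorProduct.lid k (H ⊗[k] H)).toLinearMap ∘ₗ TensorProduct.map ((TensorProduct.lid k k).toLinearMap ∘ₗ TensorProduct.map ε ε) (LinearMap.id : H ⊗[k] H →ₗ[k] H ⊗[k] H) ∘ₗ (TensorProduct.tensorTensorTensorComm k H H H H).toLinearMap
        = TensorProduct.map ((TensorProduct.lid k H).toLinearMap ∘ₗ TensorProduct.map ε (LinearMap.id : H →ₗ[k] H))
            ((TensorProduct.lid k H).toLinearMap ∘ₗ TensorProduct.map ε (LinearMap.id : H →ₗ[k] H)) :=
      TensorProduct.ext_fourfold' fun x y z w => by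
        simp [TensorProduct.smul_tmul', TensorProduct.tmul_smul, smul_smul, mul_comm]
    refine TensorProduct.ext' fun a b => ?_
    have E1 := LinearMap.congr_fun st (Δ a ⊗ₜ[k] Δ b)
    have ha := LinearMap.congr_fun hcounit_l a
    have hb := LinearMap.congr_fun hcounit_l b
    simp only [LinearMap.coe_comp, LinearEquiv.coe_toLinearMap, LinearEquiv.coe_coe, Function.comp_apply, LinearEquiv.coe_coe, TensorProduct.map_tmul] at E1 ha hb ⊢
    rw [E1, ha, hb]
  -- map-level forms / misc helpers
  have hmapαα : ∀ w : H ⊗[k] H, (TensorProduct.lift μ) ((TensorProduct.map α.toLinearMap α.toLinearMap) w) = α ((TensorProduct.lift μ) w) := by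
    intro w
    have : (TensorProduct.lift μ) ∘ₗ (TensorProduct.map α.toLinearMap α.toLinearMap) = α.toLinearMap ∘ₗ (TensorProduct.lift μ) :=
      TensorProduct.ext' fun x y => by
        simp only [LinearMap.coe_comp, LinearEquiv.coe_toLinearMap, LinearEquiv.coe_coe, Function.comp_apply, TensorProduct.map_tmul, LinearEquiv.coe_coe]
        rw [hm, hm, hαm]
    have h := LinearMap.congr_fun this w
    simpa only [LinearMap.coe_comp, LinearEquiv.coe_toLinearMap, LinearEquiv.coe_coe, Function.comp_apply, LinearEquiv.coe_coe] using h
  have hmapα'α' : ∀ w : H ⊗[k] H, (TensorProduct.lift μ) ((TensorProduct.map α.symm.toLinearMap α.symm.toLinearMap) w) = α.symm ((TensorProduct.lift μ) w) := by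
    intro w
    have : (TensorProduct.lift μ) ∘ₗ (TensorProduct.map α.symm.toLinearMap α.symm.toLinearMap) = α.symm.toLinearMap ∘ₗ (TensorProduct.lift μ) :=
      TensorProduct.ext' fun x y => by
        simp only [LinearMap.coe_comp, LinearEquiv.coe_toLinearMap, LinearEquiv.coe_coe, Function.comp_apply, TensorProduct.map_tmul, LinearEquiv.coe_coe]
        rw [hm, hm, hωm]
    have h := LinearMap.congr_fun this w
    simpa only [LinearMap.coe_comp, LinearEquiv.coe_toLinearMap, LinearEquiv.coe_coe, Function.comp_apply, LinearEquiv.coe_coe] using h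
  have hSr : ∀ c : H, (TensorProduct.lift μ) ((TensorProduct.map (LinearMap.id : H →ₗ[k] H) S) (Δ c)) = ε c • one := by
    intro c
    have h := LinearMap.congr_fun hS_right c
    simpa only [LinearMap.coe_comp, LinearEquiv.coe_toLinearMap, LinearEquiv.coe_coe, Function.comp_apply, LinearMap.toSpanSingleton_apply] using h
  have hSl : ∀ c : H, (TensorProduct.lift μ) ((TensorProduct.map S (LinearMap.id : H →ₗ[k] H)) (Δ c)) = ε c • one := by
    intro c
    have h := LinearMap.congr_fun hS_left c
    simpa only [LinearMap.coe_comp, LinearEquiv.coe_toLinearMap, LinearEquiv.coe_coe, Function.comp_apply, LinearMap.toSpanSingleton_apply] using h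
  -- Claim 1 : (S∘m) * m = e₂
  have claim1 : (TensorProduct.lift μ) ∘ₗ TensorProduct.map (S ∘ₗ (TensorProduct.lift μ)) (TensorProduct.lift μ) ∘ₗ ((TensorProduct.tensorTensorTensorComm k H H H H).toLinearMap ∘ₗ TensorProduct.map Δ Δ) = (LinearMap.toSpanSingleton k H one) ∘ₗ ((TensorProduct.lid k k).toLinearMap ∘ₗ TensorProduct.map ε ε) := by
    have fac : TensorProduct.map (S ∘ₗ (TensorProduct.lift μ)) (TensorProduct.lift μ)
        = TensorProduct.map S (LinearMap.id : H →ₗ[k] H) ∘ₗ TensorProduct.map (TensorProduct.lift μ) (TensorProduct.lift μ) := by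
      rw [← TensorProduct.map_comp, LinearMap.id_comp]
    refine TensorProduct.ext' fun a b => ?_
    have hmult := LinearMap.congr_fun hΔmult (a ⊗ₜ[k] b)
    simp only [LinearMap.coe_comp, LinearEquiv.coe_toLinearMap, LinearEquiv.coe_coe, Function.comp_apply, LinearEquiv.coe_coe, TensorProduct.map_tmul, fac,
      LinearMap.toSpanSingleton_apply] at hmult ⊢
    rw [← hmult, hSl, hm, hεm]
    simp [TensorProduct.lid_tmul, smul_smul]
  have hK : ∀ c : H, (TensorProduct.lift μ) ((TensorProduct.map α.symm.toLinearMap (S ∘ₗ α.symm.toLinearMap)) (Δ c)) = ε c • one := by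
    intro c
    have fac : TensorProduct.map α.symm.toLinearMap (S ∘ₗ α.symm.toLinearMap) = TensorProduct.map (LinearMap.id : H →ₗ[k] H) S ∘ₗ TensorProduct.map α.symm.toLinearMap α.symm.toLinearMap := by
      rw [← TensorProduct.map_comp, LinearMap.id_comp]
    have hω := LinearMap.congr_fun hωΔ c
    simp only [LinearMap.coe_comp, LinearEquiv.coe_toLinearMap, LinearEquiv.coe_coe, Function.comp_apply, LinearEquiv.coe_coe] at hω
    rw [fac]
    simp only [LinearMap.coe_comp, LinearEquiv.coe_toLinearMap, LinearEquiv.coe_coe, Function.comp_apply]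
    rw [hω, hSr, hεα']
  -- Claim 2 : m * G₀ = e₂   where G₀ (x⊗y) = μ (S (β (α⁻¹ y))) (S (β⁻¹ (α x)))
  have key : ∀ x z u v : H, μ (μ x z) (μ (β u) v) = μ (α x) (μ (μ (α.symm z) u) v) := by
    intro x z u v
    have h1 : μ (μ (α.symm z) u) v = μ z (μ u (β.symm v)) := by
      have h2 := hassoc (α.symm z) u (β.symm v)
      rw [LinearEquiv.apply_symm_apply, LinearEquiv.apply_symm_apply] at h2
      exact h2.symm
    rw [h1, hassoc x z (μ u (β.symm v)), hβm, LinearEquiv.apply_symm_apply]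
  have claim2 : (TensorProduct.lift μ) ∘ₗ TensorProduct.map (TensorProduct.lift μ) ((TensorProduct.lift μ) ∘ₗ TensorProduct.map (S ∘ₗ (β.toLinearMap ∘ₗ α.symm.toLinearMap)) (S ∘ₗ (β.symm.toLinearMap ∘ₗ α.toLinearMap)) ∘ₗ (TensorProduct.comm k H H).toLinearMap) ∘ₗ ((TensorProduct.tensorTensorTensorComm k H H H H).toLinearMap ∘ₗ TensorProduct.map Δ Δ)
      = (LinearMap.toSpanSingleton k H one) ∘ₗ ((TensorProduct.lid k k).toLinearMap ∘ₗ TensorProduct.map ε ε) := by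
    have L2 : ∀ u v : H ⊗[k] H,
        (TensorProduct.lift μ) ((TensorProduct.map (TensorProduct.lift μ) ((TensorProduct.lift μ) ∘ₗ TensorProduct.map (S ∘ₗ (β.toLinearMap ∘ₗ α.symm.toLinearMap)) (S ∘ₗ (β.symm.toLinearMap ∘ₗ α.toLinearMap)) ∘ₗ (TensorProduct.comm k H H).toLinearMap)) ((TensorProduct.tensorTensorTensorComm k H H H H).toLinearMap (u ⊗ₜ[k] v)))
          = (TensorProduct.lift μ) ((TensorProduct.map α.toLinearMap ((μ.compl₂ (S ∘ₗ (β.symm.toLinearMap ∘ₗ α.toLinearMap)))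
              ((TensorProduct.lift μ) ((TensorProduct.map α.symm.toLinearMap (S ∘ₗ α.symm.toLinearMap)) v)))) u) := by
      intro u v
      induction v using TensorProduct.induction_on with
      | zero => simp
      | tmul z w =>
        induction u using TensorProduct.induction_on with
        | zero => simp
        | tmul x y =>
          simp only [LinearMap.coe_comp, LinearEquiv.coe_toLinearMap, LinearEquiv.coe_coe, Function.comp_apply, TensorProduct.map_tmul, LinearEquiv.coe_coe,
            TensorProduct.tensorTensorTensorComm_tmul, TensorProduct.comm_tmul,
            LinearMap.compl₂_apply, hm]
          rw [hSβ (α.symm w), key]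
        | add u1 u2 h1 h2 =>
          simp only [add_tmul, tmul_add, map_add] at h1 h2 ⊢
          rw [h1, h2]
      | add v1 v2 h1 h2 =>
        simp only [add_tmul, tmul_add, map_add, LinearMap.add_apply,
          TensorProduct.map_add_right] at h1 h2 ⊢
        rw [h1, h2]
    have hNone : (μ.compl₂ (S ∘ₗ (β.symm.toLinearMap ∘ₗ α.toLinearMap))) one = S ∘ₗ α.toLinearMap := by
      ext y
      simp only [LinearMap.compl₂_apply, LinearMap.coe_comp, LinearEquiv.coe_toLinearMap, LinearEquiv.coe_coe, Function.comp_apply, LinearEquiv.coe_coe]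
      rw [hl1, ← hSβ, LinearEquiv.apply_symm_apply]
    refine TensorProduct.ext' fun a b => ?_
    have L2' := L2 (Δ a) (Δ b)
    simp only [LinearMap.coe_comp, LinearEquiv.coe_toLinearMap, LinearEquiv.coe_coe, Function.comp_apply, LinearEquiv.coe_coe] at L2' ⊢
    refine L2'.trans ?_
    rw [hK, map_smul, TensorProduct.map_smul_right, LinearMap.smul_apply, map_smul, hNone]
    have fac2 : TensorProduct.map α.toLinearMap (S ∘ₗ α.toLinearMap) = TensorProduct.map α.toLinearMap α.toLinearMap ∘ₗ TensorProduct.map (LinearMap.id : H →ₗ[k] H) S := by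
      rw [← TensorProduct.map_comp, LinearMap.comp_id]
      congr 1
      ext y
      simp only [LinearMap.coe_comp, LinearEquiv.coe_toLinearMap, LinearEquiv.coe_coe, Function.comp_apply, LinearEquiv.coe_coe]
      rw [hSα]
    rw [fac2]
    simp only [LinearMap.coe_comp, LinearEquiv.coe_toLinearMap, LinearEquiv.coe_coe, Function.comp_apply]
    rw [hmapαα, hSr]
    simp only [map_smul, hα1, LinearMap.toSpanSingleton_apply, TensorProduct.map_tmul,
      TensorProduct.lid_tmul, LinearEquiv.coe_coe, smul_smul, mul_comm]
  -- ==== part (ii) : assembling via convolution ====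
  have hαS : ∀ x, α (S x) = S (α x) := fun x => (hSα x).symm
  have hβS : ∀ x, β (S x) = S (β x) := fun x => (hSβ x).symm
  have hα'S : ∀ x, α.symm (S x) = S (α.symm x) := fun x => (hSα' x).symm
  have hβ'S : ∀ x, β.symm (S x) = S (β.symm x) := fun x => (hSβ' x).symm
  have hassocE : ∀ p q r : H,
      (TensorProduct.lift μ) (α.toLinearMap p ⊗ₜ[k] (TensorProduct.lift μ) (q ⊗ₜ[k] r)) = (TensorProduct.lift μ) ((TensorProduct.lift μ) (p ⊗ₜ[k] q) ⊗ₜ[k] β.toLinearMap r) := by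
    intro p q r
    rw [hm, hm, hm, hm]
    exact hassoc p q r
  have hαω2 : ∀ x : H ⊗[k] H, (TensorProduct.map α.toLinearMap α.toLinearMap) ((TensorProduct.map α.symm.toLinearMap α.symm.toLinearMap) x) = x := by
    intro x
    have h0 : (TensorProduct.map α.toLinearMap α.toLinearMap) ∘ₗ (TensorProduct.map α.symm.toLinearMap α.symm.toLinearMap) = (LinearMap.id : H ⊗[k] H →ₗ[k] H ⊗[k] H) :=
      TensorProduct.ext' fun a b => by simp
    have h := LinearMap.congr_fun h0 x
    simpa only [LinearMap.coe_comp, LinearEquiv.coe_toLinearMap, LinearEquiv.coe_coe, Function.comp_apply, LinearMap.id_coe, id_eq] using h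
  have hf2 : ∀ x : H ⊗[k] H, (S ∘ₗ (TensorProduct.lift μ)) ((TensorProduct.map α.toLinearMap α.toLinearMap) x) = α.toLinearMap ((S ∘ₗ (TensorProduct.lift μ)) x) := by
    intro x
    have h0 : (S ∘ₗ (TensorProduct.lift μ)) ∘ₗ (TensorProduct.map α.toLinearMap α.toLinearMap) = α.toLinearMap ∘ₗ (S ∘ₗ (TensorProduct.lift μ)) :=
      TensorProduct.ext' fun a b => by
        simp only [LinearMap.coe_comp, LinearEquiv.coe_toLinearMap, LinearEquiv.coe_coe, Function.comp_apply, TensorProduct.map_tmul, LinearEquiv.coe_coe]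
        rw [hm, hm, ← hαm, hSα]
    have h := LinearMap.congr_fun h0 x
    simpa only [LinearMap.coe_comp, LinearEquiv.coe_toLinearMap, LinearEquiv.coe_coe, Function.comp_apply] using h
  have ACL := biHom_conv_assoc (TensorProduct.lift μ) ((TensorProduct.tensorTensorTensorComm k H H H H).toLinearMap ∘ₗ TensorProduct.map Δ Δ) α.toLinearMap β.toLinearMap (TensorProduct.map α.toLinearMap α.toLinearMap) (TensorProduct.map α.symm.toLinearMap α.symm.toLinearMap) (TensorProduct.map β.symm.toLinearMap β.symm.toLinearMap)
    (S ∘ₗ (TensorProduct.lift μ)) (S ∘ₗ (TensorProduct.lift μ)) (TensorProduct.lift μ)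
    ((TensorProduct.lift μ) ∘ₗ TensorProduct.map (S ∘ₗ (β.toLinearMap ∘ₗ α.symm.toLinearMap)) (S ∘ₗ (β.symm.toLinearMap ∘ₗ α.toLinearMap)) ∘ₗ (TensorProduct.comm k H H).toLinearMap)
    hassocE hco2 hαω2 hf2
  rw [claim2, claim1] at ACL
  rw [biHom_conv_unit_right (TensorProduct.lift μ) ((TensorProduct.tensorTensorTensorComm k H H H H).toLinearMap ∘ₗ TensorProduct.map Δ Δ) α.toLinearMap (TensorProduct.map α.symm.toLinearMap α.symm.toLinearMap) one ((TensorProduct.lid k k).toLinearMap ∘ₗ TensorProduct.map ε ε) (S ∘ₗ (TensorProduct.lift μ))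
      (fun a => by rw [hm, hr1]; rfl) hcounit2r,
    biHom_conv_unit_left (TensorProduct.lift μ) ((TensorProduct.tensorTensorTensorComm k H H H H).toLinearMap ∘ₗ TensorProduct.map Δ Δ) β.toLinearMap (TensorProduct.map β.symm.toLinearMap β.symm.toLinearMap) one ((TensorProduct.lid k k).toLinearMap ∘ₗ TensorProduct.map ε ε)
      (β.toLinearMap ∘ₗ ((TensorProduct.lift μ) ∘ₗ TensorProduct.map (S ∘ₗ (β.toLinearMap ∘ₗ α.symm.toLinearMap)) (S ∘ₗ (β.symm.toLinearMap ∘ₗ α.toLinearMap)) ∘ₗ (TensorProduct.comm k H H).toLinearMap) ∘ₗ (TensorProduct.map β.symm.toLinearMap β.symm.toLinearMap))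
      (fun a => by rw [hm, hl1]; rfl) hcounit2l] at ACL
  have part2 : ∀ a b : H, S (μ (β a) (α b)) = μ (S (β b)) (S (α a)) := by
    intro a b
    apply α.injective
    have E := LinearMap.congr_fun ACL ((α (β a)) ⊗ₜ[k] (α (α b)))
    simp only [LinearMap.coe_comp, LinearEquiv.coe_toLinearMap, LinearEquiv.coe_coe, Function.comp_apply, TensorProduct.map_tmul, LinearEquiv.coe_coe,
      TensorProduct.comm_tmul, hm, hαm, hβm, hαS, hβS, hα'S, hβ'S,
      hab, haβ', hab', hab'', LinearEquiv.symm_apply_apply,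
      LinearEquiv.apply_symm_apply] at E ⊢
    exact E
  -- ==== part (iii) ====
  have hALALS : α.toLinearMap ∘ₗ α.symm.toLinearMap = (LinearMap.id : H →ₗ[k] H) := LinearMap.ext fun x => by simp
  have hassoc2E : ∀ p q r : H ⊗[k] H,
      (TensorProduct.map (TensorProduct.lift μ) (TensorProduct.lift μ) ∘ₗ (TensorProduct.tensorTensorTensorComm k H H H H).toLinearMap) ((TensorProduct.map α.toLinearMap α.toLinearMap) p ⊗ₜ[k] (TensorProduct.map (TensorProduct.lift μ) (TensorProduct.lift μ) ∘ₗ (TensorProduct.tensorTensorTensorComm k H H H H).toLinearMap) (q ⊗ₜ[k] r)) = (TensorProduct.map (TensorProduct.lift μ) (TensorProduct.lift μ) ∘ₗ (TensorProduct.tensorTensorTensorComm k H H H H).toLinearMap) ((TensorProduct.map (TensorProduct.lift μ) (TensorProduct.lift μ) ∘ₗ (TensorProduct.tensorTensorTensorComm k H H H H).toLinearMap) (p ⊗ₜ[k] q) ⊗ₜ[k] (TensorProduct.map β.toLinearMap β.toLinearMap) r) := by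
    intro p q r
    induction p using TensorProduct.induction_on with
    | zero => simp
    | tmul a b =>
      induction q using TensorProduct.induction_on with
      | zero => simp
      | tmul c d =>
        induction r using TensorProduct.induction_on with
        | zero => simp
        | tmul e f =>
          simp only [LinearMap.coe_comp, LinearEquiv.coe_toLinearMap, LinearEquiv.coe_coe, Function.comp_apply, TensorProduct.map_tmul,
            TensorProduct.tensorTensorTensorComm_tmul, hm]
          rw [hassoc, hassoc]
        | add r1 r2 h1 h2 =>
          simp only [tmul_add, add_tmul, map_add] at h1 h2 ⊢
          rw [h1, h2]
      | add q1 q2 h1 h2 =>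
        simp only [tmul_add, add_tmul, map_add] at h1 h2 ⊢
        rw [h1, h2]
    | add p1 p2 h1 h2 =>
      simp only [tmul_add, add_tmul, map_add] at h1 h2 ⊢
      rw [h1, h2]
  have hr2 : ∀ x : H ⊗[k] H, (TensorProduct.map (TensorProduct.lift μ) (TensorProduct.lift μ) ∘ₗ (TensorProduct.tensorTensorTensorComm k H H H H).toLinearMap) (x ⊗ₜ[k] (one ⊗ₜ[k] one)) = (TensorProduct.map α.toLinearMap α.toLinearMap) x := by
    intro x
    induction x using TensorProduct.induction_on with
    | zero => simp
    | tmul a b =>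
      simp only [LinearMap.coe_comp, LinearEquiv.coe_toLinearMap, LinearEquiv.coe_coe, Function.comp_apply, TensorProduct.map_tmul,
        TensorProduct.tensorTensorTensorComm_tmul, hm, hr1]
    | add x1 x2 h1 h2 =>
      simp only [add_tmul, map_add] at h1 h2 ⊢
      rw [h1, h2]
  have hl2 : ∀ x : H ⊗[k] H, (TensorProduct.map (TensorProduct.lift μ) (TensorProduct.lift μ) ∘ₗ (TensorProduct.tensorTensorTensorComm k H H H H).toLinearMap) ((one ⊗ₜ[k] one) ⊗ₜ[k] x) = (TensorProduct.map β.toLinearMap β.toLinearMap) x := by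
    intro x
    induction x using TensorProduct.induction_on with
    | zero => simp
    | tmul a b =>
      simp only [LinearMap.coe_comp, LinearEquiv.coe_toLinearMap, LinearEquiv.coe_coe, Function.comp_apply, TensorProduct.map_tmul,
        TensorProduct.tensorTensorTensorComm_tmul, hm, hl1]
    | add x1 x2 h1 h2 =>
      simp only [tmul_add, map_add] at h1 h2 ⊢
      rw [h1, h2]
  have hαωH : ∀ x : H, α.toLinearMap (α.symm.toLinearMap x) = x := fun x => by simp
  have hf3 : ∀ x : H, (Δ ∘ₗ S) (α.toLinearMap x) = (TensorProduct.map α.toLinearMap α.toLinearMap) ((Δ ∘ₗ S) x) := by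
    intro x
    have h := LinearMap.congr_fun hαΔ (S x)
    simp only [LinearMap.coe_comp, LinearEquiv.coe_toLinearMap, LinearEquiv.coe_coe, Function.comp_apply, LinearEquiv.coe_coe] at h ⊢
    rw [hSα]
    exact h.symm
  -- claim A : (Δ∘S) * Δ = e
  have claimA : (TensorProduct.map (TensorProduct.lift μ) (TensorProduct.lift μ) ∘ₗ (TensorProduct.tensorTensorTensorComm k H H H H).toLinearMap) ∘ₗ TensorProduct.map (Δ ∘ₗ S) Δ ∘ₗ Δ = (LinearMap.toSpanSingleton k (H ⊗[k] H) (one ⊗ₜ[k] one)) ∘ₗ ε := by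
    have fac : TensorProduct.map (Δ ∘ₗ S) Δ = TensorProduct.map Δ Δ ∘ₗ TensorProduct.map S (LinearMap.id : H →ₗ[k] H) := by
      rw [← TensorProduct.map_comp, LinearMap.comp_id]
    ext c
    have hmult := LinearMap.congr_fun hΔmult ((TensorProduct.map S (LinearMap.id : H →ₗ[k] H)) (Δ c))
    simp only [LinearMap.coe_comp, LinearEquiv.coe_toLinearMap, LinearEquiv.coe_coe, Function.comp_apply, LinearEquiv.coe_coe, fac, LinearMap.toSpanSingleton_apply] at hmult ⊢
    rw [← hmult, hSl, map_smul, hΔ1]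
  -- claim B : Δ * G' = e
  have hRα : ∀ y : H, (TensorProduct.lift μ) ((TensorProduct.map α.toLinearMap (S ∘ₗ α.toLinearMap)) (Δ y)) = ε y • one := by
    intro y
    have fac : TensorProduct.map α.toLinearMap (S ∘ₗ α.toLinearMap) = TensorProduct.map α.toLinearMap α.toLinearMap ∘ₗ TensorProduct.map (LinearMap.id : H →ₗ[k] H) S :=
      TensorProduct.ext' fun a b => by
        simp only [LinearMap.coe_comp, LinearEquiv.coe_toLinearMap, LinearEquiv.coe_coe, Function.comp_apply, TensorProduct.map_tmul, LinearMap.id_coe, id_eq]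
        rw [hSα]
    rw [fac]
    simp only [LinearMap.coe_comp, LinearEquiv.coe_toLinearMap, LinearEquiv.coe_coe, Function.comp_apply]
    rw [hmapαα, hSr, map_smul, hα1]
  have claimB : (TensorProduct.map (TensorProduct.lift μ) (TensorProduct.lift μ) ∘ₗ (TensorProduct.tensorTensorTensorComm k H H H H).toLinearMap) ∘ₗ TensorProduct.map Δ ((TensorProduct.map (S ∘ₗ (α.symm.toLinearMap ∘ₗ β.toLinearMap)) (S ∘ₗ (α.toLinearMap ∘ₗ β.symm.toLinearMap)) ∘ₗ (TensorProduct.comm k H H).toLinearMap) ∘ₗ Δ) ∘ₗ Δ = (LinearMap.toSpanSingleton k (H ⊗[k] H) (one ⊗ₜ[k] one)) ∘ₗ ε := by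
    ext c
    simp only [LinearMap.coe_comp, LinearEquiv.coe_toLinearMap, LinearEquiv.coe_coe, Function.comp_apply, LinearEquiv.coe_coe, LinearMap.toSpanSingleton_apply]
    have e1 : TensorProduct.map Δ ((TensorProduct.map (S ∘ₗ (α.symm.toLinearMap ∘ₗ β.toLinearMap)) (S ∘ₗ (α.toLinearMap ∘ₗ β.symm.toLinearMap)) ∘ₗ (TensorProduct.comm k H H).toLinearMap) ∘ₗ Δ) = TensorProduct.map (LinearMap.id : H ⊗[k] H →ₗ[k] H ⊗[k] H) (TensorProduct.map (S ∘ₗ (α.symm.toLinearMap ∘ₗ β.toLinearMap)) (S ∘ₗ (α.toLinearMap ∘ₗ β.symm.toLinearMap)) ∘ₗ (TensorProduct.comm k H H).toLinearMap) ∘ₗ TensorProduct.map Δ Δ := by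
      rw [← TensorProduct.map_comp, LinearMap.id_comp]
    have E1 := LinearMap.congr_fun e1 (Δ c)
    simp only [LinearMap.coe_comp, LinearEquiv.coe_toLinearMap, LinearEquiv.coe_coe, Function.comp_apply] at E1
    rw [E1]
    -- rewrite the double coproduct
    have s1 : (TensorProduct.map Δ Δ) (Δ c)
        = (TensorProduct.map (LinearMap.id : H ⊗[k] H →ₗ[k] H ⊗[k] H) ((TensorProduct.map β.toLinearMap β.toLinearMap) ∘ₗ Δ)) ((TensorProduct.assoc k H H H).symm ((TensorProduct.map α.symm.toLinearMap Δ) (Δ c))) := by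
      have f1 : TensorProduct.map Δ Δ = TensorProduct.map (LinearMap.id : H ⊗[k] H →ₗ[k] H ⊗[k] H) ((TensorProduct.map β.toLinearMap β.toLinearMap) ∘ₗ Δ) ∘ₗ TensorProduct.map Δ β.symm.toLinearMap :=
        TensorProduct.ext' fun a b => by
          have hb := LinearMap.congr_fun hβΔ (β.symm b)
          simp only [LinearMap.coe_comp, LinearEquiv.coe_toLinearMap, LinearEquiv.coe_coe, Function.comp_apply, LinearEquiv.coe_coe, TensorProduct.map_tmul,
            LinearMap.id_coe, id_eq] at hb ⊢
          rw [hb, LinearEquiv.apply_symm_apply]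
      have hc := LinearMap.congr_fun hcoassoc c
      simp only [LinearMap.coe_comp, LinearEquiv.coe_toLinearMap, LinearEquiv.coe_coe, Function.comp_apply, LinearEquiv.coe_coe] at hc
      have E := LinearMap.congr_fun f1 (Δ c)
      simp only [LinearMap.coe_comp, LinearEquiv.coe_toLinearMap, LinearEquiv.coe_coe, Function.comp_apply] at E
      rw [E, ← hc, LinearEquiv.symm_apply_apply]
    rw [s1]
    have s2 : ∀ v : H ⊗[k] (H ⊗[k] H),
        (TensorProduct.map (LinearMap.id : H ⊗[k] H →ₗ[k] H ⊗[k] H) ((TensorProduct.map β.toLinearMap β.toLinearMap) ∘ₗ Δ)) ((TensorProduct.assoc k H H H).symm v)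
          = (TensorProduct.assoc k H H (H ⊗[k] H)).symm ((TensorProduct.map (LinearMap.id : H →ₗ[k] H) (TensorProduct.map (LinearMap.id : H →ₗ[k] H) ((TensorProduct.map β.toLinearMap β.toLinearMap) ∘ₗ Δ))) v) := by
      intro v
      have h0 : TensorProduct.map (LinearMap.id : H ⊗[k] H →ₗ[k] H ⊗[k] H) ((TensorProduct.map β.toLinearMap β.toLinearMap) ∘ₗ Δ) ∘ₗ (TensorProduct.assoc k H H H).symm.toLinearMap
          = (TensorProduct.assoc k H H (H ⊗[k] H)).symm.toLinearMap ∘ₗ TensorProduct.map (LinearMap.id : H →ₗ[k] H) (TensorProduct.map (LinearMap.id : H →ₗ[k] H) ((TensorProduct.map β.toLinearMap β.toLinearMap) ∘ₗ Δ)) :=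
        TensorProduct.ext' fun x w => by
          induction w using TensorProduct.induction_on with
          | zero => simp
          | tmul y z => simp
          | add w1 w2 h1 h2 =>
            simp only [tmul_add, map_add] at h1 h2 ⊢
            rw [h1, h2]
      have h := LinearMap.congr_fun h0 v
      simpa only [LinearMap.coe_comp, LinearEquiv.coe_toLinearMap, LinearEquiv.coe_coe, Function.comp_apply, LinearEquiv.coe_coe] using h
    rw [s2 ((TensorProduct.map α.symm.toLinearMap Δ) (Δ c))]
    have s3 : ∀ w : H ⊗[k] H,
        (TensorProduct.map (LinearMap.id : H →ₗ[k] H) (TensorProduct.map (LinearMap.id : H →ₗ[k] H) ((TensorProduct.map β.toLinearMap β.toLinearMap) ∘ₗ Δ))) ((TensorProduct.map α.symm.toLinearMap Δ) w)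
          = (TensorProduct.map α.symm.toLinearMap ((TensorProduct.map (LinearMap.id : H →ₗ[k] H) ((TensorProduct.map β.toLinearMap β.toLinearMap) ∘ₗ Δ)) ∘ₗ Δ)) w := by
      intro w
      rw [map_map_apply, LinearMap.id_comp]
    rw [s3 (Δ c)]
    have s4 : (TensorProduct.map (LinearMap.id : H →ₗ[k] H) ((TensorProduct.map β.toLinearMap β.toLinearMap) ∘ₗ Δ)) ∘ₗ Δ
        = (TensorProduct.map α.toLinearMap (TensorProduct.map β.toLinearMap β.toLinearMap)) ∘ₗ (TensorProduct.assoc k H H H).toLinearMap ∘ₗ TensorProduct.map Δ β.symm.toLinearMap ∘ₗ Δ := by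
      ext c'
      simp only [LinearMap.coe_comp, LinearEquiv.coe_toLinearMap, LinearEquiv.coe_coe, Function.comp_apply, LinearEquiv.coe_coe]
      have g1 : (TensorProduct.map (LinearMap.id : H →ₗ[k] H) ((TensorProduct.map β.toLinearMap β.toLinearMap) ∘ₗ Δ)) (Δ c')
          = (TensorProduct.map (LinearMap.id : H →ₗ[k] H) (TensorProduct.map β.toLinearMap β.toLinearMap)) ((TensorProduct.map (LinearMap.id : H →ₗ[k] H) Δ) (Δ c')) := by
        rw [map_map_apply, LinearMap.id_comp]
      have g2 : (TensorProduct.map (LinearMap.id : H →ₗ[k] H) Δ) (Δ c') = (TensorProduct.map α.toLinearMap (LinearMap.id : H ⊗[k] H →ₗ[k] H ⊗[k] H)) ((TensorProduct.map α.symm.toLinearMap Δ) (Δ c')) := by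
        rw [map_map_apply, hALALS, LinearMap.id_comp]
      have hc' := LinearMap.congr_fun hcoassoc c'
      simp only [LinearMap.coe_comp, LinearEquiv.coe_toLinearMap, LinearEquiv.coe_coe, Function.comp_apply, LinearEquiv.coe_coe] at hc'
      have g3 : ∀ v : H ⊗[k] (H ⊗[k] H),
          (TensorProduct.map (LinearMap.id : H →ₗ[k] H) (TensorProduct.map β.toLinearMap β.toLinearMap)) ((TensorProduct.map α.toLinearMap (LinearMap.id : H ⊗[k] H →ₗ[k] H ⊗[k] H)) v) = (TensorProduct.map α.toLinearMap (TensorProduct.map β.toLinearMap β.toLinearMap)) v := by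
        intro v
        rw [map_map_apply, LinearMap.id_comp, LinearMap.comp_id]
      rw [g1, g2, g3, ← hc']
    rw [s4]
    have s5 : ∀ w : H ⊗[k] H,
        (TensorProduct.map α.symm.toLinearMap ((TensorProduct.map α.toLinearMap (TensorProduct.map β.toLinearMap β.toLinearMap)) ∘ₗ (TensorProduct.assoc k H H H).toLinearMap ∘ₗ TensorProduct.map Δ β.symm.toLinearMap ∘ₗ Δ)) w
          = (TensorProduct.map (LinearMap.id : H →ₗ[k] H) ((TensorProduct.map α.toLinearMap (TensorProduct.map β.toLinearMap β.toLinearMap)) ∘ₗ (TensorProduct.assoc k H H H).toLinearMap))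
              ((TensorProduct.map α.symm.toLinearMap (TensorProduct.map Δ β.symm.toLinearMap)) ((TensorProduct.map (LinearMap.id : H →ₗ[k] H) Δ) w)) := by
      intro w
      rw [map_map_apply, map_map_apply]
      simp only [LinearMap.id_comp, LinearMap.comp_id, LinearMap.comp_assoc]
    rw [s5 (Δ c)]
    have h6 : TensorProduct.map (TensorProduct.lift μ) (TensorProduct.lift μ) ∘ₗ (TensorProduct.tensorTensorTensorComm k H H H H).toLinearMap ∘ₗ TensorProduct.map (LinearMap.id : H ⊗[k] H →ₗ[k] H ⊗[k] H) (TensorProduct.map (S ∘ₗ (α.symm.toLinearMap ∘ₗ β.toLinearMap)) (S ∘ₗ (α.toLinearMap ∘ₗ β.symm.toLinearMap)) ∘ₗ (TensorProduct.comm k H H).toLinearMap)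
          ∘ₗ (TensorProduct.assoc k H H (H ⊗[k] H)).symm.toLinearMap ∘ₗ TensorProduct.map (LinearMap.id : H →ₗ[k] H) ((TensorProduct.map α.toLinearMap (TensorProduct.map β.toLinearMap β.toLinearMap)) ∘ₗ (TensorProduct.assoc k H H H).toLinearMap)
        = TensorProduct.map (TensorProduct.lift μ ∘ₗ TensorProduct.map (LinearMap.id : H →ₗ[k] H) (S ∘ₗ (α.symm.toLinearMap ∘ₗ (β.toLinearMap ∘ₗ β.toLinearMap)))) (TensorProduct.lift μ ∘ₗ TensorProduct.map α.toLinearMap (S ∘ₗ α.toLinearMap)) ∘ₗ (TensorProduct.assoc k H H (H ⊗[k] H)).symm.toLinearMap ∘ₗ TensorProduct.map (LinearMap.id : H →ₗ[k] H) (TensorProduct.comm k (H ⊗[k] H) H).toLinearMap := by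
      refine TensorProduct.ext' fun x w => ?_
      induction w using TensorProduct.induction_on with
      | zero => simp
      | tmul u z =>
        induction u using TensorProduct.induction_on with
        | zero => simp
        | tmul u1 u2 =>
          simp only [LinearMap.coe_comp, LinearEquiv.coe_toLinearMap, LinearEquiv.coe_coe, Function.comp_apply, LinearEquiv.coe_coe, TensorProduct.map_tmul,
            TensorProduct.assoc_tmul, TensorProduct.assoc_symm_tmul,
            TensorProduct.comm_tmul, TensorProduct.tensorTensorTensorComm_tmul,
            LinearMap.id_coe, id_eq, hm, LinearEquiv.apply_symm_apply,
            LinearEquiv.symm_apply_apply]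
        | add v1 v2 h1 h2 =>
          simp only [tmul_add, add_tmul, map_add] at h1 h2 ⊢
          rw [h1, h2]
      | add w1 w2 h1 h2 =>
        simp only [tmul_add, map_add] at h1 h2 ⊢
        rw [h1, h2]
    have E6 := LinearMap.congr_fun h6 ((TensorProduct.map α.symm.toLinearMap (TensorProduct.map Δ β.symm.toLinearMap)) ((TensorProduct.map (LinearMap.id : H →ₗ[k] H) Δ) (Δ c)))
    simp only [LinearMap.coe_comp, LinearEquiv.coe_toLinearMap, LinearEquiv.coe_coe, Function.comp_apply, LinearEquiv.coe_coe] at E6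
    rw [E6]
    have h7 : TensorProduct.map (TensorProduct.lift μ ∘ₗ TensorProduct.map (LinearMap.id : H →ₗ[k] H) (S ∘ₗ (α.symm.toLinearMap ∘ₗ (β.toLinearMap ∘ₗ β.toLinearMap)))) (TensorProduct.lift μ ∘ₗ TensorProduct.map α.toLinearMap (S ∘ₗ α.toLinearMap)) ∘ₗ (TensorProduct.assoc k H H (H ⊗[k] H)).symm.toLinearMap ∘ₗ TensorProduct.map (LinearMap.id : H →ₗ[k] H) (TensorProduct.comm k (H ⊗[k] H) H).toLinearMap ∘ₗ TensorProduct.map α.symm.toLinearMap (TensorProduct.map Δ β.symm.toLinearMap)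
        = TensorProduct.map (TensorProduct.lift μ ∘ₗ TensorProduct.map α.symm.toLinearMap (S ∘ₗ (α.symm.toLinearMap ∘ₗ β.toLinearMap))) ((LinearMap.toSpanSingleton k H one) ∘ₗ ε) ∘ₗ (TensorProduct.assoc k H H H).symm.toLinearMap ∘ₗ TensorProduct.map (LinearMap.id : H →ₗ[k] H) (TensorProduct.comm k H H).toLinearMap := by
      refine TensorProduct.ext' fun x v => ?_
      induction v using TensorProduct.induction_on with
      | zero => simp
      | tmul y z =>
        simp only [LinearMap.coe_comp, LinearEquiv.coe_toLinearMap, LinearEquiv.coe_coe, Function.comp_apply, LinearEquiv.coe_coe, TensorProduct.map_tmul,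
          TensorProduct.comm_tmul, TensorProduct.assoc_symm_tmul, LinearMap.id_coe,
          id_eq, hm, LinearMap.toSpanSingleton_apply, LinearEquiv.apply_symm_apply]
        rw [hRα]
      | add v1 v2 h1 h2 =>
        simp only [tmul_add, map_add] at h1 h2 ⊢
        rw [h1, h2]
    have E7 := LinearMap.congr_fun h7 ((TensorProduct.map (LinearMap.id : H →ₗ[k] H) Δ) (Δ c))
    simp only [LinearMap.coe_comp, LinearEquiv.coe_toLinearMap, LinearEquiv.coe_coe, Function.comp_apply, LinearEquiv.coe_coe] at E7
    rw [E7]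
    have h8 : ∀ (x : H) (u : H ⊗[k] H),
        (TensorProduct.map (TensorProduct.lift μ ∘ₗ TensorProduct.map α.symm.toLinearMap (S ∘ₗ (α.symm.toLinearMap ∘ₗ β.toLinearMap))) ((LinearMap.toSpanSingleton k H one) ∘ₗ ε)) ((TensorProduct.assoc k H H H).symm (x ⊗ₜ[k] (TensorProduct.comm k H H) u))
          = ((TensorProduct.mk k H H).flip one) ((TensorProduct.lift μ ∘ₗ TensorProduct.map α.symm.toLinearMap (S ∘ₗ (α.symm.toLinearMap ∘ₗ β.toLinearMap))) (x ⊗ₜ[k] ((TensorProduct.lid k H) ((TensorProduct.map ε (LinearMap.id : H →ₗ[k] H)) u)))) := by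
      intro x u
      induction u using TensorProduct.induction_on with
      | zero => simp
      | tmul y z =>
        simp only [LinearMap.coe_comp, LinearEquiv.coe_toLinearMap, LinearEquiv.coe_coe, Function.comp_apply, LinearEquiv.coe_coe, TensorProduct.map_tmul,
          TensorProduct.comm_tmul, TensorProduct.assoc_symm_tmul, LinearMap.id_coe,
          id_eq, LinearMap.toSpanSingleton_apply, TensorProduct.lid_tmul,
          TensorProduct.tmul_smul, map_smul, TensorProduct.mk_apply, LinearMap.flip_apply,
          TensorProduct.smul_tmul', hm, LinearMap.smul_apply]
      | add u1 u2 h1 h2 =>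
        simp only [tmul_add, map_add] at h1 h2 ⊢
        rw [h1, h2]
    have h9 : TensorProduct.map (TensorProduct.lift μ ∘ₗ TensorProduct.map α.symm.toLinearMap (S ∘ₗ (α.symm.toLinearMap ∘ₗ β.toLinearMap))) ((LinearMap.toSpanSingleton k H one) ∘ₗ ε) ∘ₗ (TensorProduct.assoc k H H H).symm.toLinearMap ∘ₗ TensorProduct.map (LinearMap.id : H →ₗ[k] H) (TensorProduct.comm k H H).toLinearMap ∘ₗ TensorProduct.map (LinearMap.id : H →ₗ[k] H) Δ
        = ((TensorProduct.mk k H H).flip one) ∘ₗ (TensorProduct.lift μ) ∘ₗ TensorProduct.map α.symm.toLinearMap (S ∘ₗ α.symm.toLinearMap) := by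
      refine TensorProduct.ext' fun x y => ?_
      have hcl := LinearMap.congr_fun hcounit_l y
      simp only [LinearMap.coe_comp, LinearEquiv.coe_toLinearMap, LinearEquiv.coe_coe, Function.comp_apply, LinearEquiv.coe_coe, LinearMap.id_coe, id_eq] at hcl
      simp only [LinearMap.coe_comp, LinearEquiv.coe_toLinearMap, LinearEquiv.coe_coe, Function.comp_apply, LinearEquiv.coe_coe, TensorProduct.map_tmul,
        LinearMap.id_coe, id_eq]
      rw [h8 x (Δ y), hcl]
      simp only [TensorProduct.map_tmul, LinearMap.coe_comp, LinearEquiv.coe_toLinearMap, LinearEquiv.coe_coe, Function.comp_apply, LinearEquiv.coe_coe, hm,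
        LinearEquiv.apply_symm_apply]
    have E9 := LinearMap.congr_fun h9 (Δ c)
    simp only [LinearMap.coe_comp, LinearEquiv.coe_toLinearMap, LinearEquiv.coe_coe, Function.comp_apply, LinearEquiv.coe_coe] at E9
    rw [E9, hK]
    simp only [map_smul, TensorProduct.mk_apply, LinearMap.flip_apply,
      TensorProduct.smul_tmul']
  -- convolution assembly for part (iii)
  have ACL2 := biHom_conv_assoc (TensorProduct.map (TensorProduct.lift μ) (TensorProduct.lift μ) ∘ₗ (TensorProduct.tensorTensorTensorComm k H H H H).toLinearMap) Δ (TensorProduct.map α.toLinearMap α.toLinearMap) (TensorProduct.map β.toLinearMap β.toLinearMap) α.toLinearMap α.symm.toLinearMap β.symm.toLinearMap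
    (Δ ∘ₗ S) (Δ ∘ₗ S) Δ ((TensorProduct.map (S ∘ₗ (α.symm.toLinearMap ∘ₗ β.toLinearMap)) (S ∘ₗ (α.toLinearMap ∘ₗ β.symm.toLinearMap)) ∘ₗ (TensorProduct.comm k H H).toLinearMap) ∘ₗ Δ) hassoc2E hcoassoc hαωH hf3
  rw [claimB, claimA] at ACL2
  rw [biHom_conv_unit_right (TensorProduct.map (TensorProduct.lift μ) (TensorProduct.lift μ) ∘ₗ (TensorProduct.tensorTensorTensorComm k H H H H).toLinearMap) Δ (TensorProduct.map α.toLinearMap α.toLinearMap) α.symm.toLinearMap (one ⊗ₜ[k] one) ε (Δ ∘ₗ S) hr2 hcounit_r,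
    biHom_conv_unit_left (TensorProduct.map (TensorProduct.lift μ) (TensorProduct.lift μ) ∘ₗ (TensorProduct.tensorTensorTensorComm k H H H H).toLinearMap) Δ (TensorProduct.map β.toLinearMap β.toLinearMap) β.symm.toLinearMap (one ⊗ₜ[k] one) ε
      ((TensorProduct.map β.toLinearMap β.toLinearMap) ∘ₗ ((TensorProduct.map (S ∘ₗ (α.symm.toLinearMap ∘ₗ β.toLinearMap)) (S ∘ₗ (α.toLinearMap ∘ₗ β.symm.toLinearMap)) ∘ₗ (TensorProduct.comm k H H).toLinearMap) ∘ₗ Δ) ∘ₗ β.symm.toLinearMap) hl2 hcounit_l] at ACL2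
  have LHSid : (TensorProduct.map α.toLinearMap α.toLinearMap) ∘ₗ (Δ ∘ₗ S) ∘ₗ α.symm.toLinearMap = Δ ∘ₗ S := by
    ext x
    have hω := LinearMap.congr_fun hωΔ (S x)
    simp only [LinearMap.coe_comp, LinearEquiv.coe_toLinearMap, LinearEquiv.coe_coe, Function.comp_apply, LinearEquiv.coe_coe] at hω ⊢
    rw [hSα', ← hω]
    exact hαω2 (Δ (S x))
  rw [LHSid] at ACL2
  have hψe : ∀ w : H, Δ (β.symm w) = (TensorProduct.map β.symm.toLinearMap β.symm.toLinearMap) (Δ w) := by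
    intro w
    have h := LinearMap.congr_fun hψΔ w
    simp only [LinearMap.coe_comp, LinearEquiv.coe_toLinearMap, LinearEquiv.coe_coe, Function.comp_apply, LinearEquiv.coe_coe] at h
    exact h.symm
  have part3 : TensorProduct.map α.toLinearMap β.toLinearMap ∘ₗ Δ ∘ₗ S = TensorProduct.map β.toLinearMap α.toLinearMap ∘ₗ (TensorProduct.comm k H H).toLinearMap ∘ₗ TensorProduct.map S S ∘ₗ Δ := by
    ext x
    simp only [LinearMap.coe_comp, LinearEquiv.coe_toLinearMap, LinearEquiv.coe_coe, Function.comp_apply, LinearEquiv.coe_coe]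
    have E := LinearMap.congr_fun ACL2 x
    simp only [LinearMap.coe_comp, LinearEquiv.coe_toLinearMap, LinearEquiv.coe_coe, Function.comp_apply, LinearEquiv.coe_coe] at E
    rw [E, hψe (β.symm x), hψe x]
    simp only [comm_map_apply, map_map_apply]
    congr 1
    congr 1
    · ext y
      simp only [LinearMap.coe_comp, LinearEquiv.coe_toLinearMap, LinearEquiv.coe_coe, Function.comp_apply, LinearEquiv.coe_coe, hαS, hβS, hα'S, hβ'S, hab, haβ', hab',
        hab'', LinearEquiv.symm_apply_apply, LinearEquiv.apply_symm_apply]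
    · ext y
      simp only [LinearMap.coe_comp, LinearEquiv.coe_toLinearMap, LinearEquiv.coe_coe, Function.comp_apply, LinearEquiv.coe_coe, hαS, hβS, hα'S, hβ'S, hab, haβ', hab',
        hab'', LinearEquiv.symm_apply_apply, LinearEquiv.apply_symm_apply]
  exact ⟨hS1, hεS, part2, part3⟩
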